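/- Let k be a field of characteristic 5, and let a₄, a₆ ∈ k[s,t,x,y] be homogeneous polynomials of degrees 4 and 6 respectively involving only the variables s and t. Set f = y² − (x³ + a₄·x + a₆). Then f⁴ lies in the ideal (s⁵, t⁵, x⁵, y⁵) of k[s,t,x,y] if and only if a₄ = 0 and there exist a, b, c, d ∈ k with a₆ = a·s⁶ + b·s⁵·t + c·s·t⁵ + d·t⁶. -/
import Mathlib

open MvPolynomial

private lemma aux_coeff_rename_zero {k : Type*} [CommSemiring k] {n m : ℕ} (h : n ≤ m)
    (p : MvPolynomial (Fin n) k) (d : Fin m →₀ ℕ) (j : Fin m) (hj : n ≤ (j : ℕ))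
    (hdj : d j ≠ 0) : MvPolynomial.coeff d (rename (Fin.castLE h) p) = 0 := by
  by_contra hc
  obtain ⟨u, hu, -⟩ := coeff_rename_ne_zero _ _ _ hc
  apply hdj
  rw [← hu]
  apply Finsupp.mapDomain_notin_range
  rintro ⟨i, rfl⟩
  have := i.isLt
  simp only [Fin.coe_castLE] at hj
  omega

private lemma aux_sub_single (d : Fin 4 →₀ ℕ) (i : Fin 4) (a b : ℕ) (h : b ≤ a) :
    d + Finsupp.single i a - Finsupp.single i b = d + Finsupp.single i (a - b) := by
  ext j
  simp only [Finsupp.coe_tsub, Pi.sub_apply, Finsupp.coe_add, Pi.add_apply,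
    Finsupp.single_apply]
  split_ifs <;> omega

private lemma aux_single_eq (i j i' j' : ℕ) :
    (Finsupp.single (0 : Fin 4) i + Finsupp.single 1 j
      = Finsupp.single 0 i' + Finsupp.single 1 j') ↔ (i = i' ∧ j = j') := by
  constructor
  · intro h
    constructor
    · have := DFunLike.congr_fun h 0
      simpa using this
    · have := DFunLike.congr_fun h 1
      simpa using this
  · rintro ⟨rfl, rfl⟩; rfl

private lemma aux_ev0 (i j : ℕ) :
    (Finsupp.single (0 : Fin 4) i + Finsupp.single (1 : Fin 4) j : Fin 4 →₀ ℕ) 0 = i := by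
  rw [Finsupp.add_apply, Finsupp.single_eq_same, Finsupp.single_eq_of_ne (by decide), add_zero]

private lemma aux_ev1 (i j : ℕ) :
    (Finsupp.single (0 : Fin 4) i + Finsupp.single (1 : Fin 4) j : Fin 4 →₀ ℕ) 1 = j := by
  rw [Finsupp.add_apply, Finsupp.single_eq_same, Finsupp.single_eq_of_ne (by decide), zero_add]

private lemma aux_ev2 (i j : ℕ) :
    (Finsupp.single (0 : Fin 4) i + Finsupp.single (1 : Fin 4) j : Fin 4 →₀ ℕ) 2 = 0 := by
  rw [Finsupp.add_apply, Finsupp.single_eq_of_ne (by decide),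
    Finsupp.single_eq_of_ne (by decide), add_zero]

private lemma aux_ev3 (i j : ℕ) :
    (Finsupp.single (0 : Fin 4) i + Finsupp.single (1 : Fin 4) j : Fin 4 →₀ ℕ) 3 = 0 := by
  rw [Finsupp.add_apply, Finsupp.single_eq_of_ne (by decide),
    Finsupp.single_eq_of_ne (by decide), add_zero]

private lemma aux_degree_four (d : Fin 4 →₀ ℕ) : d.degree = d 0 + d 1 + d 2 + d 3 := by
  rw [Finsupp.degree, ← Fin.sum_univ_four fun i => d i]
  exact Finset.sum_subset (Finset.subset_univ _)
    (fun i _ hi => Finsupp.notMem_support_iff.mp hi)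

/-- coefficient of `x^4`-part of `g^2` -/
private lemma aux_cg2_four {k : Type*} [Field k] (hle : (2:ℕ) ≤ 4)
    (p₄ p₆ : MvPolynomial (Fin 2) k)
    (d : Fin 4 →₀ ℕ) (hd2 : d 2 = 0) :
    coeff (d + Finsupp.single 2 4)
      ((X 2 ^ 3 + rename (Fin.castLE hle) p₄ * X 2
        + rename (Fin.castLE hle) p₆) ^ 2)
      = 2 * coeff d (rename (Fin.castLE hle) p₄) := by
  set A := rename (Fin.castLE hle) p₄ with hA
  set B := rename (Fin.castLE hle) p₆ with hB
  have hexp : (X 2 ^ 3 + A * X 2 + B) ^ 2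
      = monomial (Finsupp.single 2 6) 1
        + C 2 * (A * monomial (Finsupp.single 2 4) 1)
        + C 2 * (B * monomial (Finsupp.single 2 3) 1)
        + (A * A) * monomial (Finsupp.single 2 2) 1
        + C 2 * ((A * B) * monomial (Finsupp.single 2 1) 1)
        + B * B := by
    simp only [← X_pow_eq_monomial, map_ofNat]
    ring
  rw [hexp]
  simp only [coeff_add, coeff_C_mul, coeff_mul_monomial', coeff_monomial]
  have c1 : ¬ (Finsupp.single (2:Fin 4) 6 = d + Finsupp.single 2 4) := by
    intro h; have := DFunLike.congr_fun h 2; simp [hd2] at this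
  have c2 : Finsupp.single (2:Fin 4) 4 ≤ d + Finsupp.single 2 4 := by
    rw [Finsupp.single_le_iff]; simp
  have c3 : Finsupp.single (2:Fin 4) 3 ≤ d + Finsupp.single 2 4 := by
    rw [Finsupp.single_le_iff]; simp [Finsupp.single_apply]
  have c4 : Finsupp.single (2:Fin 4) 2 ≤ d + Finsupp.single 2 4 := by
    rw [Finsupp.single_le_iff]; simp [Finsupp.single_apply]
  have c5 : Finsupp.single (2:Fin 4) 1 ≤ d + Finsupp.single 2 4 := by
    rw [Finsupp.single_le_iff]; simp [Finsupp.single_apply]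
  rw [if_neg c1, if_pos c2, if_pos c3, if_pos c4, if_pos c5,
    aux_sub_single d 2 4 4 (by norm_num), aux_sub_single d 2 4 3 (by norm_num),
    aux_sub_single d 2 4 2 (by norm_num), aux_sub_single d 2 4 1 (by norm_num)]
  have z3 : coeff (d + Finsupp.single 2 (4-3)) B = 0 := by
    rw [hB]
    exact aux_coeff_rename_zero _ _ _ 2 (by norm_num) (by simp [hd2, Finsupp.single_apply])
  have z4 : coeff (d + Finsupp.single 2 (4-2)) (A * A) = 0 := by
    rw [hA, ← map_mul]
    exact aux_coeff_rename_zero _ _ _ 2 (by norm_num) (by simp [hd2, Finsupp.single_apply])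
  have z5 : coeff (d + Finsupp.single 2 (4-1)) (A * B) = 0 := by
    rw [hA, hB, ← map_mul]
    exact aux_coeff_rename_zero _ _ _ 2 (by norm_num) (by simp [hd2, Finsupp.single_apply])
  have z6 : coeff (d + Finsupp.single 2 4) (B * B) = 0 := by
    rw [hB, ← map_mul]
    exact aux_coeff_rename_zero _ _ _ 2 (by norm_num) (by simp [hd2, Finsupp.single_apply])
  rw [z3, z4, z5, z6]
  have e2 : d + Finsupp.single (2:Fin 4) (4-4) = d := by simp
  rw [e2]
  ring

/-- coefficient of `x^3`-part of `g^2` -/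
private lemma aux_cg2_three {k : Type*} [Field k] (hle : (2:ℕ) ≤ 4)
    (p₄ p₆ : MvPolynomial (Fin 2) k)
    (d : Fin 4 →₀ ℕ) (hd2 : d 2 = 0) :
    coeff (d + Finsupp.single 2 3)
      ((X 2 ^ 3 + rename (Fin.castLE hle) p₄ * X 2
        + rename (Fin.castLE hle) p₆) ^ 2)
      = 2 * coeff d (rename (Fin.castLE hle) p₆) := by
  set A := rename (Fin.castLE hle) p₄ with hA
  set B := rename (Fin.castLE hle) p₆ with hB
  have hexp : (X 2 ^ 3 + A * X 2 + B) ^ 2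
      = monomial (Finsupp.single 2 6) 1
        + C 2 * (A * monomial (Finsupp.single 2 4) 1)
        + C 2 * (B * monomial (Finsupp.single 2 3) 1)
        + (A * A) * monomial (Finsupp.single 2 2) 1
        + C 2 * ((A * B) * monomial (Finsupp.single 2 1) 1)
        + B * B := by
    simp only [← X_pow_eq_monomial, map_ofNat]
    ring
  rw [hexp]
  simp only [coeff_add, coeff_C_mul, coeff_mul_monomial', coeff_monomial]
  have c1 : ¬ (Finsupp.single (2:Fin 4) 6 = d + Finsupp.single 2 3) := by
    intro h; have := DFunLike.congr_fun h 2; simp [hd2] at this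
  have c2 : ¬ (Finsupp.single (2:Fin 4) 4 ≤ d + Finsupp.single 2 3) := by
    rw [Finsupp.single_le_iff]; simp [hd2]
  have c3 : Finsupp.single (2:Fin 4) 3 ≤ d + Finsupp.single 2 3 := by
    rw [Finsupp.single_le_iff]; simp [Finsupp.single_apply]
  have c4 : Finsupp.single (2:Fin 4) 2 ≤ d + Finsupp.single 2 3 := by
    rw [Finsupp.single_le_iff]; simp [Finsupp.single_apply]
  have c5 : Finsupp.single (2:Fin 4) 1 ≤ d + Finsupp.single 2 3 := by
    rw [Finsupp.single_le_iff]; simp [Finsupp.single_apply]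
  rw [if_neg c1, if_neg c2, if_pos c3, if_pos c4, if_pos c5,
    aux_sub_single d 2 3 3 (by norm_num),
    aux_sub_single d 2 3 2 (by norm_num), aux_sub_single d 2 3 1 (by norm_num)]
  have z4 : coeff (d + Finsupp.single 2 (3-2)) (A * A) = 0 := by
    rw [hA, ← map_mul]
    exact aux_coeff_rename_zero _ _ _ 2 (by norm_num) (by simp [hd2, Finsupp.single_apply])
  have z5 : coeff (d + Finsupp.single 2 (3-1)) (A * B) = 0 := by
    rw [hA, hB, ← map_mul]
    exact aux_coeff_rename_zero _ _ _ 2 (by norm_num) (by simp [hd2, Finsupp.single_apply])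
  have z6 : coeff (d + Finsupp.single 2 3) (B * B) = 0 := by
    rw [hB, ← map_mul]
    exact aux_coeff_rename_zero _ _ _ 2 (by norm_num) (by simp [hd2, Finsupp.single_apply])
  rw [z4, z5, z6]
  have e2 : d + Finsupp.single (2:Fin 4) (3-3) = d := by simp
  rw [e2]
  ring

/-- coefficient of the `y^4` part of `f^4` -/
private lemma aux_cf4 {k : Type*} [Field k] (hle : (2:ℕ) ≤ 4)
    (p₄ p₆ : MvPolynomial (Fin 2) k) (f : MvPolynomial (Fin 4) k)
    (hf : f = X 3 ^ 2 - (X 2 ^ 3 + rename (Fin.castLE hle) p₄ * X 2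
      + rename (Fin.castLE hle) p₆))
    (c : ℕ) (d : Fin 4 →₀ ℕ) (hd3 : d 3 = 0) :
    coeff (d + Finsupp.single 2 c + Finsupp.single 3 4) (f ^ 4)
      = 6 * coeff (d + Finsupp.single 2 c)
          ((X 2 ^ 3 + rename (Fin.castLE hle) p₄ * X 2
            + rename (Fin.castLE hle) p₆) ^ 2) := by
  have hle23 : (2:ℕ) ≤ 3 := by norm_num
  have hle34 : (3:ℕ) ≤ 4 := by norm_num
  set g : MvPolynomial (Fin 4) k := X 2 ^ 3 + rename (Fin.castLE hle) p₄ * X 2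
      + rename (Fin.castLE hle) p₆ with hg
  set E : MvPolynomial (Fin 3) k := X 2 ^ 3 + rename (Fin.castLE hle23) p₄ * X 2
      + rename (Fin.castLE hle23) p₆ with hE
  have hcomp : (Fin.castLE hle34) ∘ (Fin.castLE hle23) = Fin.castLE hle :=
    funext fun i => rfl
  have hX2 : Fin.castLE hle34 (2 : Fin 3) = (2 : Fin 4) := rfl
  have hgE : g = rename (Fin.castLE hle34) E := by
    rw [hg, hE, map_add, map_add, map_mul, map_pow, rename_X, rename_rename,
      rename_rename, hcomp, hX2]
  have hf4 : f ^ 4 = monomial (Finsupp.single 3 8) 1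
      - C 4 * (g * monomial (Finsupp.single 3 6) 1)
      + C 6 * (g ^ 2 * monomial (Finsupp.single 3 4) 1)
      - C 4 * (g ^ 3 * monomial (Finsupp.single 3 2) 1)
      + g ^ 4 := by
    simp only [← X_pow_eq_monomial, map_ofNat]
    rw [hf]
    ring
  rw [hf4]
  set m : Fin 4 →₀ ℕ := d + Finsupp.single 2 c + Finsupp.single 3 4 with hm
  have hm3 : m 3 = 4 := by simp [hm, hd3, Finsupp.single_apply]
  simp only [coeff_add, coeff_sub, coeff_C_mul, coeff_mul_monomial', coeff_monomial]
  have c1 : ¬ (Finsupp.single (3:Fin 4) 8 = m) := by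
    intro h; have := DFunLike.congr_fun h 3; rw [hm3] at this; simp at this
  have c2 : ¬ (Finsupp.single (3:Fin 4) 6 ≤ m) := by
    rw [Finsupp.single_le_iff, hm3]; omega
  have c3 : Finsupp.single (3:Fin 4) 4 ≤ m := by
    rw [Finsupp.single_le_iff, hm3]
  have c4 : Finsupp.single (3:Fin 4) 2 ≤ m := by
    rw [Finsupp.single_le_iff, hm3]; omega
  have e3 : m - Finsupp.single 3 4 = d + Finsupp.single 2 c :=
    add_tsub_cancel_right _ _
  have e4 : m - Finsupp.single 3 2 = (d + Finsupp.single 2 c) + Finsupp.single 3 2 :=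
    (aux_sub_single _ 3 4 2 (by norm_num)).trans rfl
  rw [if_neg c1, if_neg c2, if_pos c3, if_pos c4, e3, e4]
  have z4 : coeff (d + Finsupp.single 2 c + Finsupp.single 3 2) (g ^ 3) = 0 := by
    rw [hgE, ← map_pow]
    exact aux_coeff_rename_zero _ _ _ 3 (by decide) (by simp [hd3, Finsupp.single_apply])
  have z5 : coeff m (g ^ 4) = 0 := by
    rw [hgE, ← map_pow]
    exact aux_coeff_rename_zero _ _ _ 3 (by decide) (by rw [hm3]; norm_num)
  rw [z4, z5]
  ring

private lemma forward_aux {k : Type*} [Field k] [CharP k 5] (hle : (2:ℕ) ≤ 4)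
    (p₄ p₆ : MvPolynomial (Fin 2) k)
    (h₄deg : (rename (Fin.castLE hle) p₄ : MvPolynomial (Fin 4) k).IsHomogeneous 4)
    (h₆deg : (rename (Fin.castLE hle) p₆ : MvPolynomial (Fin 4) k).IsHomogeneous 6)
    (f : MvPolynomial (Fin 4) k)
    (hf : f = X 3 ^ 2 - (X 2 ^ 3 + rename (Fin.castLE hle) p₄ * X 2
      + rename (Fin.castLE hle) p₆))
    (hmem : f ^ 4 ∈ Ideal.span {(X 0 ^ 5 : MvPolynomial (Fin 4) k), X 1 ^ 5, X 2 ^ 5, X 3 ^ 5}) :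
    rename (Fin.castLE hle) p₄ = 0 ∧ ∃ a b c d : k,
      rename (Fin.castLE hle) p₆ = C a * X 0 ^ 6 + C b * X 0 ^ 5 * X 1
        + C c * X 0 * X 1 ^ 5 + C d * X 1 ^ 6 := by
  set A : MvPolynomial (Fin 4) k := rename (Fin.castLE hle) p₄ with hA
  set B : MvPolynomial (Fin 4) k := rename (Fin.castLE hle) p₆ with hB
  have hset : ({X 0 ^ 5, X 1 ^ 5, X 2 ^ 5, X 3 ^ 5} : Set (MvPolynomial (Fin 4) k))
      = (fun s => monomial s (1:k)) ''
        {Finsupp.single 0 5, Finsupp.single 1 5, Finsupp.single 2 5, Finsupp.single 3 5} := by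
    rw [Set.image_insert_eq, Set.image_insert_eq, Set.image_insert_eq, Set.image_singleton]
    simp only [X_pow_eq_monomial]
  rw [hset, mem_ideal_span_monomial_image] at hmem
  have hco : ∀ m : Fin 4 →₀ ℕ, m 0 ≤ 4 → m 1 ≤ 4 → m 2 ≤ 4 → m 3 ≤ 4 →
      coeff m (f ^ 4) = 0 := by
    intro m h0 h1 h2 h3
    by_contra hc
    obtain ⟨si, hsi, hlesi⟩ := hmem m (by rwa [mem_support_iff])
    simp only [Set.mem_insert_iff, Set.mem_singleton_iff] at hsi
    rcases hsi with rfl | rfl | rfl | rfl <;>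
      (rw [Finsupp.single_le_iff] at hlesi; omega)
  have h5 : (5:k) = 0 := by exact_mod_cast CharP.cast_eq_zero k 5
  have h12 : ((6:k) * 2) ≠ 0 := fun h => one_ne_zero (α := k) (by linear_combination 3*h - 7*h5)
  have key4 : ∀ d : Fin 4 →₀ ℕ, d 2 = 0 → d 3 = 0 → d 0 ≤ 4 → d 1 ≤ 4 →
      coeff d A = 0 := by
    intro d hd2 hd3 h0 h1
    have hz := hco (d + Finsupp.single 2 4 + Finsupp.single 3 4)
      (by simpa [Finsupp.single_apply] using h0)
      (by simpa [Finsupp.single_apply] using h1)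
      (by simp [Finsupp.single_apply, hd2])
      (by simp [Finsupp.single_apply, hd3])
    rw [aux_cf4 hle p₄ p₆ f hf 4 d hd3, aux_cg2_four hle p₄ p₆ d hd2] at hz
    have h0' : (6:k) * 2 * coeff d A = 0 := by rw [mul_assoc]; exact hz
    exact (mul_eq_zero.mp h0').resolve_left h12
  have key6 : ∀ d : Fin 4 →₀ ℕ, d 2 = 0 → d 3 = 0 → d 0 ≤ 4 → d 1 ≤ 4 →
      coeff d B = 0 := by
    intro d hd2 hd3 h0 h1
    have hz := hco (d + Finsupp.single 2 3 + Finsupp.single 3 4)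
      (by simpa [Finsupp.single_apply] using h0)
      (by simpa [Finsupp.single_apply] using h1)
      (by simp [Finsupp.single_apply, hd2])
      (by simp [Finsupp.single_apply, hd3])
    rw [aux_cf4 hle p₄ p₆ f hf 3 d hd3, aux_cg2_three hle p₄ p₆ d hd2] at hz
    have h0' : (6:k) * 2 * coeff d B = 0 := by rw [mul_assoc]; exact hz
    exact (mul_eq_zero.mp h0').resolve_left h12
  constructor
  · ext d
    rw [coeff_zero]
    by_cases hd2 : d 2 = 0
    swap
    · rw [hA]; exact aux_coeff_rename_zero hle p₄ d 2 (by decide) hd2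
    by_cases hd3 : d 3 = 0
    swap
    · rw [hA]; exact aux_coeff_rename_zero hle p₄ d 3 (by decide) hd3
    by_contra hne
    have hdeg : (Finsupp.weight 1) d = 4 := h₄deg hne
    have hdeg' : d.degree = 4 := by rw [Finsupp.degree_eq_weight_one]; exact hdeg
    rw [aux_degree_four, hd2, hd3] at hdeg'
    exact hne (key4 d hd2 hd3 (by omega) (by omega))
  · refine ⟨coeff (Finsupp.single 0 6 + Finsupp.single 1 0) B, coeff (Finsupp.single 0 5 + Finsupp.single 1 1) B,
      coeff (Finsupp.single 0 1 + Finsupp.single 1 5) B,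
      coeff (Finsupp.single 0 0 + Finsupp.single 1 6) B, ?_⟩
    have mk : ∀ (i j : ℕ) (r : k), (C r * (X 0 : MvPolynomial (Fin 4) k) ^ i * X 1 ^ j)
        = monomial (Finsupp.single 0 i + Finsupp.single 1 j) r := by
      intro i j r
      rw [C_mul_X_pow_eq_monomial, X_pow_eq_monomial, monomial_mul, mul_one]
    have huni : ∀ a b c d' : k, C a * (X 0 : MvPolynomial (Fin 4) k) ^ 6 + C b * X 0 ^ 5 * X 1
        + C c * X 0 * X 1 ^ 5 + C d' * X 1 ^ 6
        = C a * X 0 ^ 6 * X 1 ^ 0 + C b * X 0 ^ 5 * X 1 ^ 1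
          + C c * X 0 ^ 1 * X 1 ^ 5 + C d' * X 0 ^ 0 * X 1 ^ 6 := by
      intro a b c d'; ring
    rw [huni, mk, mk, mk, mk]
    ext d
    simp only [coeff_add, coeff_monomial]
    by_cases hd2 : d 2 = 0
    swap
    · rw [if_neg (fun h => hd2 (by rw [← h]; simp [Finsupp.single_apply])),
        if_neg (fun h => hd2 (by rw [← h]; simp [Finsupp.single_apply])),
        if_neg (fun h => hd2 (by rw [← h]; simp [Finsupp.single_apply])),
        if_neg (fun h => hd2 (by rw [← h]; simp [Finsupp.single_apply])), hB]
      simp only [add_zero]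
      exact aux_coeff_rename_zero hle p₆ d 2 (by decide) hd2
    by_cases hd3 : d 3 = 0
    swap
    · rw [if_neg (fun h => hd3 (by rw [← h]; simp [Finsupp.single_apply])),
        if_neg (fun h => hd3 (by rw [← h]; simp [Finsupp.single_apply])),
        if_neg (fun h => hd3 (by rw [← h]; simp [Finsupp.single_apply])),
        if_neg (fun h => hd3 (by rw [← h]; simp [Finsupp.single_apply])), hB]
      simp only [add_zero]
      exact aux_coeff_rename_zero hle p₆ d 3 (by decide) hd3
    have hdd : d = Finsupp.single 0 (d 0) + Finsupp.single 1 (d 1) := by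
      ext j; fin_cases j <;> simp [hd2, hd3, Finsupp.single_apply]
    rw [hdd]
    simp only [aux_single_eq]
    by_cases hdeg : d 0 + d 1 = 6
    · obtain ⟨i, hi⟩ : ∃ n, d 0 = n := ⟨d 0, rfl⟩
      have hj : d 1 = 6 - i := by omega
      have hi6 : i ≤ 6 := by omega
      rw [hi, hj]
      interval_cases i <;>
        first
        | (norm_num
           exact key6 _ (by simp) (by simp) (by simp) (by simp))
        | norm_num
    · have hB0 : coeff (Finsupp.single 0 (d 0) + Finsupp.single 1 (d 1)) B = 0 := by
        apply h₆deg.coeff_eq_zero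
        rw [aux_degree_four, aux_ev0, aux_ev1, aux_ev2, aux_ev3]
        omega
      rw [if_neg (by omega), if_neg (by omega), if_neg (by omega), if_neg (by omega), hB0]
      simp

set_option maxHeartbeats 1600000 in
theorem char5_fedder_condition (k : Type*) [Field k] [CharP k 5]
    (a₄ a₆ : MvPolynomial (Fin 4) k)
    (h₄deg : a₄.IsHomogeneous 4) (h₆deg : a₆.IsHomogeneous 6)
    (h₄st : a₄ ∈ Set.range (rename (Fin.castLE (by norm_num : 2 ≤ 4)) :
      MvPolynomial (Fin 2) k → MvPolynomial (Fin 4) k))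
    (h₆st : a₆ ∈ Set.range (rename (Fin.castLE (by norm_num : 2 ≤ 4)) :
      MvPolynomial (Fin 2) k → MvPolynomial (Fin 4) k))
    (f : MvPolynomial (Fin 4) k)
    (hf : f = X 3 ^ 2 - (X 2 ^ 3 + a₄ * X 2 + a₆)) :
    f ^ 4 ∈ Ideal.span {(X 0 ^ 5 : MvPolynomial (Fin 4) k), X 1 ^ 5, X 2 ^ 5, X 3 ^ 5} ↔
      a₄ = 0 ∧ ∃ a b c d : k,
        a₆ = C a * X 0 ^ 6 + C b * X 0 ^ 5 * X 1 + C c * X 0 * X 1 ^ 5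
            + C d * X 1 ^ 6 := by
  obtain ⟨p₄, rfl⟩ := h₄st
  obtain ⟨p₆, rfl⟩ := h₆st
  constructor
  · intro hmem
    exact forward_aux _ p₄ p₆ h₄deg h₆deg f hf hmem
  · rintro ⟨h4, a, b, c, d', h6⟩
    set I := Ideal.span {(X 0 ^ 5 : MvPolynomial (Fin 4) k), X 1 ^ 5, X 2 ^ 5, X 3 ^ 5} with hI
    have hs : (X 0 ^ 5 : MvPolynomial (Fin 4) k) ∈ I := Ideal.subset_span (by simp)
    have ht : (X 1 ^ 5 : MvPolynomial (Fin 4) k) ∈ I := Ideal.subset_span (by simp)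
    have hx : (X 2 ^ 5 : MvPolynomial (Fin 4) k) ∈ I := Ideal.subset_span (by simp)
    have hy : (X 3 ^ 5 : MvPolynomial (Fin 4) k) ∈ I := Ideal.subset_span (by simp)
    set B : MvPolynomial (Fin 4) k := rename (Fin.castLE (by norm_num : (2:ℕ) ≤ 4)) p₆ with hB
    have ha6e : B = X 0 ^ 5 * (C a * X 0 + C b * X 1) + X 1 ^ 5 * (C c * X 0 + C d' * X 1) := by
      rw [h6]; ring
    have ha6 : B ∈ I := by
      rw [ha6e]
      exact Ideal.add_mem _ (Ideal.mul_mem_right _ _ hs) (Ideal.mul_mem_right _ _ ht)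
    have key : f ^ 4 = X 3 ^ 5 * (X 3 ^ 3 - 4 * X 3 * X 2 ^ 3)
        + X 2 ^ 5 * (6 * X 2 * X 3 ^ 4 - 4 * X 2 ^ 4 * X 3 ^ 2 + X 2 ^ 7)
        + B * (B ^ 3 + 6 * (X 3 ^ 2 - X 2 ^ 3) ^ 2 * B
            - 4 * (X 3 ^ 2 - X 2 ^ 3) ^ 3 - 4 * (X 3 ^ 2 - X 2 ^ 3) * B ^ 2) := by
      rw [hf, h4]; ring
    rw [key]
    exact Ideal.add_mem _ (Ideal.add_mem _ (Ideal.mul_mem_right _ _ hy)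
      (Ideal.mul_mem_right _ _ hx)) (Ideal.mul_mem_right _ _ ha6)
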